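/- (ISS Lyapunov theorem with respect to two outputs, exponential case; Theorem 2 of the paper.) Let Ξ ⊆ ℝ^{n_ξ} be closed, let Ω_c assign to each ξ ∈ Ξ a set Ω_c(ξ) ⊆ ℝ^{n_ω} with 0 ∈ Ω_c(ξ), and let F_c : Ξ × ℝ^{n_ω} → ℝ^{n_ξ} satisfy F_c(ξ,ω) ∈ Ξ whenever ξ ∈ Ξ and ω ∈ Ω_c(ξ). Let G1 : Ξ → ℝ^{n_1}, G2 : Ξ → ℝ^{n_2}, and let X ⊆ Ξ be closed and robustly positive invariant, i.e., ξ ∈ X and ω ∈ Ω_c(ξ) imply F_c(ξ,ω) ∈ X. Suppose there exist V : Ξ → [0,∞), constants a1, a2, a3, b > 0, and σ of class 𝒦 such that for all ξ ∈ X and ω ∈ Ω_c(ξ): a1‖G1(ξ)‖^b ≤ V(ξ) ≤ a2‖G2(ξ)‖^b and V(F_c(ξ,ω)) ≤ V(ξ) − a3·V(ξ) + σ(‖ω‖). Then there exist c > 0, λ ∈ (0,1), and γ of class 𝒦 such that every trajectory with ξ(k+1) = F_c(ξ(k), ω(k)), ω(k) ∈ Ω_c(ξ(k)) for all k, and ξ(0)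 ∈ X satisfies ‖G1(ξ(k))‖ ≤ c λ^k ‖G2(ξ(0))‖ + γ(max_{0≤i≤k} ‖ω(i)‖) for all k ∈ ℕ. -/

import Mathlib

open scoped BigOperators

noncomputable section

abbrev Vec (n : ℕ) : Type := EuclideanSpace ℝ (Fin n)

/-- Class 𝒦 functions `[0,∞) → [0,∞)`. -/
def IsClassK (φ : ℝ → ℝ) : Prop :=
  ContinuousOn φ (Set.Ici 0) ∧ StrictMonoOn φ (Set.Ici 0) ∧ φ 0 = 0 ∧ ∀ t, 0 ≤ t → 0 ≤ φ t

private lemma rpow_add_le_aux {x y p : ℝ} (hx : 0 ≤ x) (hy : 0 ≤ y) (hp : 0 < p) :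
    (x + y) ^ p ≤ 2 ^ p * (x ^ p + y ^ p) := by
  have h1 : x + y ≤ 2 * max x y := by
    rcases le_total x y with h | h
    · rw [max_eq_right h]; linarith
    · rw [max_eq_left h]; linarith
  have hmax : 0 ≤ max x y := le_max_of_le_left hx
  calc (x + y) ^ p ≤ (2 * max x y) ^ p := Real.rpow_le_rpow (by positivity) h1 hp.le
    _ = 2 ^ p * (max x y) ^ p := Real.mul_rpow (by norm_num) hmax
    _ ≤ 2 ^ p * (x ^ p + y ^ p) := by
        have : (max x y) ^ p ≤ x ^ p + y ^ p := by
          rcases le_total x y with h | h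
          · rw [max_eq_right h]
            have := Real.rpow_nonneg hx p; linarith
          · rw [max_eq_left h]
            have := Real.rpow_nonneg hy p; linarith
        have h2 : (0:ℝ) ≤ 2 ^ p := Real.rpow_nonneg (by norm_num) p
        nlinarith

private lemma pow_rpow_comm {x p : ℝ} (hx : 0 ≤ x) (k : ℕ) :
    (x ^ k) ^ p = (x ^ p) ^ k := by
  rw [← Real.rpow_natCast x k, ← Real.rpow_mul hx, mul_comm,
    Real.rpow_mul hx, Real.rpow_natCast]

/-- **ISS Lyapunov theorem with respect to two outputs, exponential case (Theorem 2).** -/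
theorem iss_lyapunov_two_outputs_exponential
    {nξ nω n1 n2 : ℕ}
    (Ξ : Set (Vec nξ)) (hΞ : IsClosed Ξ)
    (Ωc : Vec nξ → Set (Vec nω)) (hΩ0 : ∀ ξ ∈ Ξ, (0 : Vec nω) ∈ Ωc ξ)
    (Fc : Vec nξ → Vec nω → Vec nξ)
    (hFΞ : ∀ ξ ∈ Ξ, ∀ ω ∈ Ωc ξ, Fc ξ ω ∈ Ξ)
    (G1 : Vec nξ → Vec n1) (G2 : Vec nξ → Vec n2)
    (X : Set (Vec nξ)) (hXcl : IsClosed X) (hXΞ : X ⊆ Ξ)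
    (hXinv : ∀ ξ ∈ X, ∀ ω ∈ Ωc ξ, Fc ξ ω ∈ X)
    (V : Vec nξ → ℝ) (hVnn : ∀ ξ ∈ Ξ, 0 ≤ V ξ)
    (a1 a2 a3 b : ℝ) (ha1 : 0 < a1) (ha2 : 0 < a2) (ha3 : 0 < a3) (hb : 0 < b)
    (σ : ℝ → ℝ) (hσ : IsClassK σ)
    (hlow : ∀ ξ ∈ X, a1 * ‖G1 ξ‖ ^ b ≤ V ξ)
    (hup : ∀ ξ ∈ X, V ξ ≤ a2 * ‖G2 ξ‖ ^ b)
    (hdec : ∀ ξ ∈ X, ∀ ω ∈ Ωc ξ, V (Fc ξ ω) ≤ V ξ - a3 * V ξ + σ ‖ω‖) :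
    ∃ (c lam : ℝ) (γ : ℝ → ℝ), 0 < c ∧ lam ∈ Set.Ioo (0 : ℝ) 1 ∧ IsClassK γ ∧
      ∀ (ξ : ℕ → Vec nξ) (ω : ℕ → Vec nω),
        (∀ k, ξ (k + 1) = Fc (ξ k) (ω k)) → (∀ k, ω k ∈ Ωc (ξ k)) → ξ 0 ∈ X →
        ∀ k : ℕ, ‖G1 (ξ k)‖ ≤ c * lam ^ k * ‖G2 (ξ 0)‖ +
          γ ((Finset.range (k + 1)).sup' Finset.nonempty_range_add_one fun i => ‖ω i‖) := by
  obtain ⟨hσc, hσm, hσ0, hσnn⟩ := hσ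
  set lam0 : ℝ := max (1 - a3) (1/2) with hlam0def
  have hlam0_pos : (0:ℝ) < lam0 := lt_of_lt_of_le (by norm_num) (le_max_right _ _)
  have hlam0_lt1 : lam0 < 1 := max_lt (by linarith) (by norm_num)
  have h1l : (0:ℝ) < 1 - lam0 := by linarith
  set p : ℝ := 1 / b with hpdef
  have hppos : 0 < p := by positivity
  set d : ℝ := 1 / (a1 * (1 - lam0)) with hddef
  have hdpos : 0 < d := by positivity
  refine ⟨(2:ℝ) ^ p * (a2 / a1) ^ p, lam0 ^ p,
    fun t => (2:ℝ) ^ p * (σ t * d) ^ p, ?_, ?_, ?_, ?_⟩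
  · have := Real.rpow_pos_of_pos (show (0:ℝ) < 2 by norm_num) p
    have := Real.rpow_pos_of_pos (show (0:ℝ) < a2 / a1 by positivity) p
    positivity
  · exact ⟨Real.rpow_pos_of_pos hlam0_pos p,
      Real.rpow_lt_one hlam0_pos.le hlam0_lt1 hppos⟩
  · refine ⟨?_, ?_, ?_, ?_⟩
    · exact continuousOn_const.mul
        ((hσc.mul continuousOn_const).rpow_const (fun x hx => Or.inr hppos.le))
    · intro x hx y hy hxy
      have h2p : (0:ℝ) < (2:ℝ) ^ p := Real.rpow_pos_of_pos (by norm_num) p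
      have hσx : 0 ≤ σ x := hσnn x hx
      have hlt : σ x * d < σ y * d := by
        have := hσm hx hy hxy
        exact mul_lt_mul_of_pos_right this hdpos
      exact mul_lt_mul_of_pos_left
        (Real.rpow_lt_rpow (by positivity) hlt hppos) h2p
    · simp [hσ0, Real.zero_rpow hppos.ne']
    · intro t ht
      have h2p : (0:ℝ) ≤ (2:ℝ) ^ p := Real.rpow_nonneg (by norm_num) p
      have := Real.rpow_nonneg (mul_nonneg (hσnn t ht) hdpos.le) p
      positivity
  · intro ξ ω hstep hω hX0 k
    -- trajectory stays in X
    have hXk : ∀ j, ξ j ∈ X := by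
      intro j
      induction j with
      | zero => exact hX0
      | succ j ih => rw [hstep j]; exact hXinv _ ih _ (hω j)
    set M : ℝ := (Finset.range (k + 1)).sup' Finset.nonempty_range_add_one
      (fun i => ‖ω i‖) with hMdef
    have hM : ∀ i ≤ k, ‖ω i‖ ≤ M := fun i hi =>
      Finset.le_sup' (fun i => ‖ω i‖) (Finset.mem_range.2 (Nat.lt_succ_of_le hi))
    have hM0 : (0:ℝ) ≤ M := le_trans (norm_nonneg (ω 0)) (hM 0 (Nat.zero_le _))
    have hσM : 0 ≤ σ M := hσnn M hM0
    set S : ℝ := σ M / (1 - lam0) with hSdef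
    have hS0 : 0 ≤ S := div_nonneg hσM h1l.le
    -- Lyapunov decay
    have hVk : ∀ j ≤ k, V (ξ j) ≤ lam0 ^ j * V (ξ 0) + S := by
      intro j
      induction j with
      | zero => intro _; simp [hS0, le_add_of_nonneg_right hS0]
      | succ j ih =>
        intro hjk
        have hjk' : j ≤ k := Nat.le_of_succ_le hjk
        have ihj := ih hjk'
        have hVnnj : 0 ≤ V (ξ j) := hVnn _ (hXΞ (hXk j))
        have hdecj : V (ξ (j+1)) ≤ V (ξ j) - a3 * V (ξ j) + σ ‖ω j‖ := by
          rw [hstep j]; exact hdec _ (hXk j) _ (hω j)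
        have hσle : σ ‖ω j‖ ≤ σ M := by
          rcases eq_or_lt_of_le (hM j hjk') with h | h
          · rw [h]
          · exact (hσm (norm_nonneg _) hM0 h).le
        have h1 : V (ξ j) - a3 * V (ξ j) ≤ lam0 * V (ξ j) := by
          have : 1 - a3 ≤ lam0 := le_max_left _ _
          nlinarith
        have h2 : V (ξ (j+1)) ≤ lam0 * V (ξ j) + σ M := by linarith
        have h3 : lam0 * V (ξ j) ≤ lam0 * (lam0 ^ j * V (ξ 0) + S) :=
          mul_le_mul_of_nonneg_left ihj hlam0_pos.le
        have hSeq : lam0 * S + σ M = S := by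
          have hS1 : S * (1 - lam0) = σ M := by rw [hSdef]; exact div_mul_cancel₀ _ h1l.ne'
          linear_combination (-1:ℝ) * hS1
        calc V (ξ (j+1)) ≤ lam0 * (lam0 ^ j * V (ξ 0) + S) + σ M := by linarith
          _ = lam0 ^ (j+1) * V (ξ 0) + (lam0 * S + σ M) := by ring
          _ = lam0 ^ (j+1) * V (ξ 0) + S := by rw [hSeq]
    -- combine
    have hVK := hVk k le_rfl
    have hlowk := hlow _ (hXk k)
    have hup0 := hup _ hX0
    have hlam0k : (0:ℝ) ≤ lam0 ^ k := pow_nonneg hlam0_pos.le k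
    have hkey : a1 * ‖G1 (ξ k)‖ ^ b ≤ lam0 ^ k * (a2 * ‖G2 (ξ 0)‖ ^ b) + S := by
      have := mul_le_mul_of_nonneg_left hup0 hlam0k
      linarith
    set A : ℝ := a2 / a1 * lam0 ^ k * ‖G2 (ξ 0)‖ ^ b with hAdef
    set B : ℝ := S / a1 with hBdef
    have hG2nn : (0:ℝ) ≤ ‖G2 (ξ 0)‖ ^ b := Real.rpow_nonneg (norm_nonneg _) b
    have hA0 : 0 ≤ A := by positivity
    have hB0 : 0 ≤ B := by positivity
    have hkey2 : ‖G1 (ξ k)‖ ^ b ≤ A + B := by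
      have hmul : a1 * (A + B) = lam0 ^ k * (a2 * ‖G2 (ξ 0)‖ ^ b) + S := by
        rw [hAdef, hBdef]; field_simp
      have : a1 * ‖G1 (ξ k)‖ ^ b ≤ a1 * (A + B) := by rw [hmul]; exact hkey
      exact le_of_mul_le_mul_left this ha1
    have hbp : b * p = 1 := by rw [hpdef, mul_one_div, div_self hb.ne']
    have hG1eq : ‖G1 (ξ k)‖ = (‖G1 (ξ k)‖ ^ b) ^ p := by
      rw [← Real.rpow_mul (norm_nonneg _), hbp, Real.rpow_one]
    have hG2eq : (‖G2 (ξ 0)‖ ^ b) ^ p = ‖G2 (ξ 0)‖ := by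
      rw [← Real.rpow_mul (norm_nonneg _), hbp, Real.rpow_one]
    have step1 : ‖G1 (ξ k)‖ ≤ (A + B) ^ p := by
      rw [hG1eq]
      exact Real.rpow_le_rpow (Real.rpow_nonneg (norm_nonneg _) b) hkey2 hppos.le
    have step2 : (A + B) ^ p ≤ 2 ^ p * (A ^ p + B ^ p) :=
      rpow_add_le_aux hA0 hB0 hppos
    have hAp : A ^ p = (a2 / a1) ^ p * (lam0 ^ p) ^ k * ‖G2 (ξ 0)‖ := by
      rw [hAdef, Real.mul_rpow (by positivity) hG2nn,
        Real.mul_rpow (by positivity) hlam0k, hG2eq,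
        pow_rpow_comm hlam0_pos.le]
    have hBp : B ^ p = (σ M * d) ^ p := by
      congr 1
      rw [hBdef, hSdef, hddef, div_div, mul_one_div, mul_comm (1 - lam0) a1]
    calc ‖G1 (ξ k)‖ ≤ 2 ^ p * (A ^ p + B ^ p) := le_trans step1 step2
      _ = 2 ^ p * (a2 / a1) ^ p * (lam0 ^ p) ^ k * ‖G2 (ξ 0)‖
          + 2 ^ p * (σ M * d) ^ p := by rw [hAp, hBp]; ring
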